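/- With binary weights, the equilibrium distribution equals the unique decomposable distribution that is leximin-maximal over charities: among all distributions δ admitting a decomposition where each agent contributes only to her approved charities, the equilibrium distribution maximizes the sorted (increasing) vector (δ(x))_{x∈A} lexicographically. -/

import Mathlib

open Finset

/-- The multiset of values of `δ`, sorted in increasing order. -/
noncomputable def sortedVec {A : Type*} [Fintype A] (δ : A → ℝ) : List ℝ :=
  Multiset.sort (Finset.univ.val.map δ) (· ≤ ·)

-- totality of lex
lemma lexTotal {α : Type*} [LinearOrder α] :
    ∀ l₁ l₂ : List α, List.Lex (· < ·) l₁ l₂ ∨ l₁ = l₂ ∨ List.Lex (· < ·) l₂ l₁ := by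
  intro l₁
  induction l₁ with
  | nil => intro l₂; cases l₂ with
    | nil => exact Or.inr (Or.inl rfl)
    | cons b t => exact Or.inl List.Lex.nil
  | cons a t ih =>
    intro l₂
    cases l₂ with
    | nil => exact Or.inr (Or.inr List.Lex.nil)
    | cons b s =>
      rcases lt_trichotomy a b with h | h | h
      · exact Or.inl (List.Lex.rel h)
      · subst h
        rcases ih s with h | h | h
        · exact Or.inl (List.Lex.cons h)
        · exact Or.inr (Or.inl (by rw [h]))
        · exact Or.inr (Or.inr (List.Lex.cons h))
      · exact Or.inr (Or.inr (List.Lex.rel h))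

lemma lexDecomp {α : Type*} {r : α → α → Prop} :
    ∀ {l₁ l₂ : List α}, List.Lex r l₁ l₂ → l₁.length = l₂.length →
      ∃ p a b s₁ s₂, l₁ = p ++ a :: s₁ ∧ l₂ = p ++ b :: s₂ ∧ r a b := by
  intro l₁ l₂ h
  induction h with
  | nil => intro h; simp at h
  | @rel a l₁ b l₂ hab => exact fun _ => ⟨[], a, b, l₁, l₂, rfl, rfl, hab⟩
  | @cons a l₁ l₂ h ih =>
    intro hlen
    obtain ⟨p, x, y, s₁, s₂, e1, e2, hxy⟩ := ih (by simpa using hlen)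
    exact ⟨a :: p, x, y, s₁, s₂, by rw [e1]; rfl, by rw [e2]; rfl, hxy⟩

lemma sumTakeA : ∀ {l' l : List ℝ}, l'.Sublist l → l.Pairwise (· ≤ ·) →
    ∀ m, m ≤ l'.length → (l.take m).sum ≤ (l'.take m).sum := by
  intro l' l h
  induction h with
  | slnil => intro _ m hm; simp at hm; simp [hm]
  | @cons l' l a h ih =>
    intro hs m hm
    rw [List.pairwise_cons] at hs
    obtain ⟨ha, hs⟩ := hs
    cases m with
    | zero => simp
    | succ k =>
      have hkl : k < l.length := lt_of_lt_of_le (Nat.lt_of_lt_of_le (Nat.lt_succ_self k) hm) h.length_le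
      have h1 : ((a :: l).take (k+1)).sum = a + (l.take k).sum := by simp
      have h2 : (l.take (k+1)).sum = (l.take k).sum + l[k] := List.sum_take_succ l k hkl
      have h3 : a ≤ l[k] := ha _ (List.getElem_mem hkl)
      calc ((a :: l).take (k+1)).sum = a + (l.take k).sum := h1
        _ ≤ (l.take k).sum + l[k] := by linarith
        _ = (l.take (k+1)).sum := h2.symm
        _ ≤ (l'.take (k+1)).sum := ih hs (k+1) hm
  | @cons_cons l' l a h ih =>
    intro hs m hm
    rw [List.pairwise_cons] at hs
    cases m with
    | zero => simp
    | succ k =>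
      simp only [List.take_succ_cons, List.sum_cons]
      have := ih hs.2 k (by simpa using hm)
      linarith

lemma sumTakeB {l' l : List ℝ} (h : List.Subperm l' l) (hl : l.Pairwise (· ≤ ·)) :
    (l.take l'.length).sum ≤ l'.sum := by
  obtain ⟨l'', hperm, hsub⟩ := h
  have hlen : l''.length = l'.length := hperm.length_eq
  have h2 := sumTakeA hsub hl l''.length le_rfl
  rw [List.take_length] at h2
  rw [← hlen]
  calc (l.take l''.length).sum ≤ l''.sum := h2
    _ = l'.sum := hperm.sum_eq

lemma sortedFilterTake : ∀ {l : List ℝ}, l.Pairwise (· ≤ ·) → ∀ t : ℝ,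
    l.filter (fun x => decide (x ≤ t)) = l.take (l.countP (fun x => decide (x ≤ t))) := by
  intro l
  induction l with
  | nil => intro _ t; simp
  | cons a l ih =>
    intro hs t
    rw [List.pairwise_cons] at hs
    by_cases hat : a ≤ t
    · rw [List.filter_cons_of_pos (by simpa using hat),
        List.countP_cons_of_pos (by simpa using hat)]
      simp [ih hs.2 t]
    · have hzero : (a :: l).countP (fun x => decide (x ≤ t)) = 0 := by
        rw [List.countP_eq_zero]
        intro x hx
        simp only [decide_eq_true_eq]
        rcases List.mem_cons.mp hx with h | h
        · subst h; exact hat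
        · exact fun hxt => hat (le_trans (hs.1 x h) hxt)
      rw [hzero, List.take_zero, List.filter_eq_nil_iff.mpr]
      intro x hx
      simp only [decide_eq_true_eq]
      rcases List.mem_cons.mp hx with h | h
      · subst h; exact hat
      · exact fun hxt => hat (le_trans (hs.1 x h) hxt)

-- K2: sum of |S| smallest values ≤ sum over S
lemma takeCardSumLe {A : Type*} [Fintype A] (δ : A → ℝ) (S : Finset A) :
    ((sortedVec δ).take S.card).sum ≤ ∑ x ∈ S, δ x := by
  classical
  set l := sortedVec δ with hl
  have hsort : l.Pairwise (· ≤ ·) := Multiset.pairwise_sort _ _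
  set l' := (S.val.map δ).toList with hl'
  have hco : (↑l' : Multiset ℝ) = S.val.map δ := Multiset.coe_toList _
  have hle : (↑l' : Multiset ℝ) ≤ ↑l := by
    rw [hco, hl, sortedVec, Multiset.sort_eq]
    exact Multiset.map_le_map (Finset.val_le_iff.mpr (Finset.subset_univ S))
  have hsub : List.Subperm l' l := Multiset.coe_le.mp hle
  have hlen : l'.length = S.card := by
    rw [← Multiset.coe_card, hco, Multiset.card_map]; rfl
  have hsum : l'.sum = ∑ x ∈ S, δ x := by
    rw [← Multiset.sum_coe, hco]; rfl
  rw [← hlen, ← hsum]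
  exact sumTakeB hsub hsort


lemma cutIneq {N A : Type*} [Fintype N] [Fintype A] [DecidableEq A]
    (C : N → ℝ) (Ai : N → Finset A) (hAi : ∀ i, (Ai i).Nonempty)
    (δstar : A → ℝ)
    (δs : N → A → ℝ) (hs0 : ∀ i x, 0 ≤ δs i x) (hscol : ∀ x, ∑ i, δs i x = δstar x)
    (hsrow : ∀ i, ∑ x, δs i x = C i) (hssupp : ∀ i x, x ∉ Ai i → δs i x = 0)
    (hseq : ∀ i x, δstar x ≠ (Ai i).inf' (hAi i) δstar → δs i x = 0)
    (δ : A → ℝ) (δi : N → A → ℝ) (hi0 : ∀ i x, 0 ≤ δi i x) (hcol : ∀ x, ∑ i, δi i x = δ x)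
    (hrow : ∀ i, ∑ x, δi i x = C i) (hsupp : ∀ i x, x ∉ Ai i → δi i x = 0)
    (t : ℝ) (L : Finset A) (hL : ∀ x, x ∈ L ↔ δstar x ≤ t) :
    ∑ x ∈ L, δ x ≤ ∑ x ∈ L, δstar x := by
  classical
  set I : Finset N := univ.filter (fun i => ∃ x ∈ Ai i, δstar x ≤ t) with hI
  -- agents not touching L contribute 0 to L: general fact
  have hnot : ∀ (e : N → A → ℝ), (∀ i x, x ∉ Ai i → e i x = 0) →
      ∀ i ∉ I, ∀ x ∈ L, e i x = 0 := by
    intro e hesupp i hiI x hxL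
    by_contra hne
    have hx : x ∈ Ai i := by
      by_contra hxn; exact hne (hesupp i x hxn)
    refine hiI ?_
    rw [hI, mem_filter]
    exact ⟨mem_univ i, x, hx, (hL x).mp hxL⟩
  -- upper bound for δ
  have h1 : ∑ x ∈ L, δ x ≤ ∑ i, (if i ∈ I then C i else 0) := by
    calc ∑ x ∈ L, δ x = ∑ x ∈ L, ∑ i, δi i x := by
          refine Finset.sum_congr rfl fun x _ => (hcol x).symm
      _ = ∑ i, ∑ x ∈ L, δi i x := Finset.sum_comm
      _ ≤ ∑ i, (if i ∈ I then C i else 0) := by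
          refine Finset.sum_le_sum fun i _ => ?_
          by_cases hiI : i ∈ I
          · simp only [hiI, if_true]
            rw [← hrow i]
            exact Finset.sum_le_sum_of_subset_of_nonneg (Finset.subset_univ L)
              (fun x _ _ => hi0 i x)
          · simp only [hiI, if_false]
            rw [Finset.sum_eq_zero (hnot δi hsupp i hiI)]
  -- equality for δstar
  have h2 : ∑ x ∈ L, δstar x = ∑ i, (if i ∈ I then C i else 0) := by
    calc ∑ x ∈ L, δstar x = ∑ x ∈ L, ∑ i, δs i x := by
          refine Finset.sum_congr rfl fun x _ => (hscol x).symm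
      _ = ∑ i, ∑ x ∈ L, δs i x := Finset.sum_comm
      _ = ∑ i, (if i ∈ I then C i else 0) := by
          refine Finset.sum_congr rfl fun i _ => ?_
          by_cases hiI : i ∈ I
          · simp only [hiI, if_true]
            rw [← hsrow i]
            refine Finset.sum_subset (Finset.subset_univ L) ?_
            intro x _ hxL
            refine hseq i x ?_
            rw [hI, mem_filter] at hiI
            obtain ⟨x0, hx0, hx0t⟩ := hiI.2
            have hmin : (Ai i).inf' (hAi i) δstar ≤ t :=
              le_trans (Finset.inf'_le δstar hx0) hx0t
            have hxgt : t < δstar x := by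
              by_contra hle
              exact hxL ((hL x).mpr (le_of_not_gt hle))
            exact fun hEq => absurd (hEq ▸ hmin) (not_le.mpr hxgt)
          · simp only [hiI, if_false]
            exact Finset.sum_eq_zero (hnot δs hssupp i hiI)
  rw [h2]; exact h1


theorem stmt_15 {N A : Type*} [Fintype N] [Fintype A] [DecidableEq A]
    (C : N → ℝ) (hC : ∀ i, 0 ≤ C i)
    (Ai : N → Finset A) (hAi : ∀ i, (Ai i).Nonempty)
    (δstar : A → ℝ) (hδs : ∀ x, 0 ≤ δstar x) (hsum : ∑ x, δstar x = ∑ i, C i)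
    -- δstar is the equilibrium distribution: it has a decomposition in which each
    -- agent contributes only to approved charities achieving her minimum:
    (heq : ∃ δi : N → A → ℝ, (∀ i x, 0 ≤ δi i x) ∧ (∀ x, ∑ i, δi i x = δstar x) ∧
        (∀ i, ∑ x, δi i x = C i) ∧
        (∀ i x, x ∉ Ai i → δi i x = 0) ∧
        (∀ i x, δstar x ≠ (Ai i).inf' (hAi i) δstar → δi i x = 0)) :
    -- δstar is leximin-maximal over charities among all decomposable distributions:
    ∀ δ : A → ℝ, (∀ x, 0 ≤ δ x) → (∑ x, δ x = ∑ i, C i) →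
      (∃ δi : N → A → ℝ, (∀ i x, 0 ≤ δi i x) ∧ (∀ x, ∑ i, δi i x = δ x) ∧
          (∀ i, ∑ x, δi i x = C i) ∧ (∀ i x, x ∉ Ai i → δi i x = 0)) →
      sortedVec δ = sortedVec δstar ∨ List.Lex (· < ·) (sortedVec δ) (sortedVec δstar) := by
  classical
  obtain ⟨δs, hs0, hscol, hsrow, hssupp, hseq⟩ := heq
  intro δ hδ0 hδsum hdec
  obtain ⟨δi, hi0, hcol, hrow, hsupp⟩ := hdec
  rcases lexTotal (sortedVec δ) (sortedVec δstar) with h | h | h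
  · exact Or.inr h
  · exact Or.inl h
  exfalso
  set l := sortedVec δ with hldef
  set ls := sortedVec δstar with hlsdef
  have hsortl : l.Pairwise (· ≤ ·) := Multiset.pairwise_sort _ _
  have hsortls : ls.Pairwise (· ≤ ·) := Multiset.pairwise_sort _ _
  have hlenl : l.length = Fintype.card A := by
    rw [hldef, sortedVec, Multiset.length_sort, Multiset.card_map]; rfl
  have hlenls : ls.length = Fintype.card A := by
    rw [hlsdef, sortedVec, Multiset.length_sort, Multiset.card_map]; rfl
  obtain ⟨p, a, b, s₁, s₂, e1, e2, hab⟩ := lexDecomp h (by rw [hlenl, hlenls])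
  -- e1 : ls = p ++ a :: s₁ ; e2 : l = p ++ b :: s₂ ; hab : a < b
  set t := a with htdef
  set L : Finset A := univ.filter (fun x => δstar x ≤ t) with hLdef
  have hL : ∀ x, x ∈ L ↔ δstar x ≤ t := by
    intro x; rw [hLdef, mem_filter]; simp
  set m := L.card with hmdef
  -- the filtered multiset identity
  have keyM : (↑(ls.filter (fun x => decide (x ≤ t))) : Multiset ℝ)
      = (L.val.map δstar) := by
    rw [hLdef, Finset.filter_val]
    rw [← Multiset.filter_coe (fun x => x ≤ t)]
    rw [hlsdef, sortedVec, Multiset.sort_eq]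
    rw [Multiset.filter_map]
    congr 1
  have hcardm : (ls.filter (fun x => decide (x ≤ t))).length = m := by
    have h2 := congrArg Multiset.card keyM
    rw [Multiset.coe_card, Multiset.card_map] at h2
    exact h2.trans (Finset.card_def L).symm
  have hsum_star : ∑ x ∈ L, δstar x = (ls.filter (fun x => decide (x ≤ t))).sum := by
    have := congrArg Multiset.sum keyM
    rw [Multiset.sum_coe] at this
    rw [this]; rfl
  have htake : ls.filter (fun x => decide (x ≤ t)) = ls.take m := by
    rw [sortedFilterTake hsortls t, List.countP_eq_length_filter, hcardm]
  -- the chain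
  have hchain : (l.take m).sum ≤ (ls.take m).sum := by
    calc (l.take m).sum ≤ ∑ x ∈ L, δ x := takeCardSumLe δ L
      _ ≤ ∑ x ∈ L, δstar x := cutIneq C Ai hAi δstar δs hs0 hscol hsrow hssupp hseq
          δ δi hi0 hcol hrow hsupp t L hL
      _ = (ls.take m).sum := by rw [hsum_star, htake]
  -- p elements are ≤ a
  have hple : ∀ x ∈ p, x ≤ a := by
    intro x hx
    have := hsortls
    rw [e1, List.pairwise_append] at this
    exact this.2.2 x hx a (List.mem_cons_self)
  -- m ≥ p.length + 1
  have hm1 : p.length + 1 ≤ m := by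
    have hpf : p.filter (fun x => decide (x ≤ t)) = p :=
      List.filter_eq_self.mpr (fun x hx => by simpa using hple x hx)
    rw [← hcardm, e1, List.filter_append, List.length_append,
      List.filter_cons_of_pos (by simp), hpf]
    simp
  have hm2 : m ≤ ls.length := by
    rw [← hcardm]; exact List.length_filter_le _ _
  set k := p.length with hkdef
  have hlen1 : ls.length = k + 1 + s₁.length := by rw [e1]; simp [hkdef]; omega
  have hlen2 : l.length = k + 1 + s₂.length := by rw [e2]; simp [hkdef]; omega
  set len := m - k - 1 with hlendef
  have hlens1 : len ≤ s₁.length := by omega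
  have hlens2 : len ≤ s₂.length := by
    have : l.length = ls.length := by rw [hlenl, hlenls]
    omega
  -- take decompositions
  have hdec1 : ls.take m = p ++ a :: s₁.take len := by
    have hm : m = p.length + (len + 1) := by omega
    rw [e1, hm, List.take_append, List.take_of_length_le (by omega), Nat.add_sub_cancel_left, List.take_succ_cons]
  have hdec2 : l.take m = p ++ b :: s₂.take len := by
    have hm : m = p.length + (len + 1) := by omega
    rw [e2, hm, List.take_append, List.take_of_length_le (by omega), Nat.add_sub_cancel_left, List.take_succ_cons]
  -- element bounds
  have hs1le : ∀ x ∈ s₁.take len, x ≤ a := by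
    intro x hx
    have hxmem : x ∈ ls.take m := by
      rw [hdec1]; exact List.mem_append_right p (List.mem_cons_of_mem a hx)
    rw [← htake] at hxmem
    have := List.of_mem_filter hxmem
    simpa using this
  have hs2ge : ∀ x ∈ s₂.take len, b ≤ x := by
    intro x hx
    have hxs : x ∈ s₂ := List.mem_of_mem_take hx
    have := hsortl
    rw [e2, List.pairwise_append] at this
    exact (List.pairwise_cons.mp this.2.1).1 x hxs
  have hb1 : (len : ℝ) * b ≤ (s₂.take len).sum := by
    have h3 := List.card_nsmul_le_sum (s₂.take len) b hs2ge
    rwa [List.length_take, Nat.min_eq_left hlens2, nsmul_eq_mul] at h3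
  have hb2 : (s₁.take len).sum ≤ (len : ℝ) * a := by
    have h3 := List.sum_le_card_nsmul (s₁.take len) a hs1le
    rwa [List.length_take, Nat.min_eq_left hlens1, nsmul_eq_mul] at h3
  rw [hdec1, hdec2] at hchain
  simp only [List.sum_append, List.sum_cons] at hchain
  have hlen0 : (0:ℝ) ≤ (len : ℝ) := Nat.cast_nonneg len
  nlinarith [hchain, hb1, hb2, hab, hlen0]
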